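/- Let Ω ⊆ ℝ² be a bounded open connected set whose boundary ∂Ω is a finite disjoint union of simple closed C² curves, and let c be a Poisson solution on Ω whose extension to the closure of Ω is continuously differentiable. Set M = sup over the closure of Ω of ‖∇c‖. Then M = sup_{Q∈∂Ω} ‖∇c(Q)‖, and ‖∇c(x)‖ < M for every x ∈ Ω (the interior supremum is strictly smaller than the boundary supremum). -/

import Mathlib

open Metric Set Filter
open scoped Matrix RealInnerProductSpace Topology

noncomputable section

/-- The Euclidean plane ℝ². -/
abbrev E2 := EuclideanSpace ℝ (Fin 2)

/-- The Laplacian `c_xx + c_yy` of a function on the plane. -/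
noncomputable def lap (c : E2 → ℝ) (p : E2) : ℝ :=
  ∑ i : Fin 2, fderiv ℝ (fun q => fderiv ℝ c q (EuclideanSpace.single i 1)) p
    (EuclideanSpace.single i 1)

/-- A Poisson solution on a bounded open set `Ω ⊆ ℝ²` (for fixed constants `K, D`):
continuous on the closure of `Ω`, twice continuously differentiable on `Ω`,
satisfying `Δc = -K/D` on `Ω` and `c = 0` on the boundary `∂Ω`. -/
structure IsPoissonSolution (K D : ℝ) (Ω : Set E2) (c : E2 → ℝ) : Prop where
  contOn : ContinuousOn c (closure Ω)
  smooth : ContDiffOn ℝ 2 c Ω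
  eqn : ∀ p ∈ Ω, lap c p = -(K / D)
  bdry : ∀ p ∈ frontier Ω, c p = 0

/-- A simple closed `C^k` curve in the plane: a `C^k`, 1-periodic, regular
parametrization which is injective on a period. -/
structure IsSimpleClosedCurve (k : ℕ∞) (γ : ℝ → E2) : Prop where
  smooth : ContDiff ℝ k γ
  periodic : Function.Periodic γ 1
  inj : Set.InjOn γ (Set.Ico (0 : ℝ) 1)
  regular : ∀ t, deriv γ t ≠ 0

/-- The signed curvature of a plane curve `γ` at parameter `t`:
`(x'y'' - y'x'')/‖γ'‖³`. -/
noncomputable def curvature2D (γ : ℝ → E2) (t : ℝ) : ℝ :=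
  (deriv (fun s => γ s 0) t * deriv (deriv fun s => γ s 1) t -
    deriv (fun s => γ s 1) t * deriv (deriv fun s => γ s 0) t) / ‖deriv γ t‖ ^ 3

/-- `Q` is a concave boundary point of `Ω` with tangent direction `T`: the tangent
line locally lies inside `Ω` except at the point of tangency itself. -/
def IsConcavePointAt (Ω : Set E2) (Q T : E2) : Prop :=
  ∃ ε > 0, ∀ s : ℝ, 0 < |s| → |s| < ε → Q + s • T ∈ Ω

/-- A bounded open connected subset of the plane whose boundary is a finite disjoint
union of simple closed `C²` curves. -/
structure IsShape (Ω : Set E2) : Prop where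
  isOpen : IsOpen Ω
  bounded : Bornology.IsBounded Ω
  connected : IsConnected Ω
  boundary_curves : ∃ (N : ℕ) (γ : Fin N → ℝ → E2),
    (∀ i, IsSimpleClosedCurve 2 (γ i)) ∧
    frontier Ω = ⋃ i, Set.range (γ i) ∧
    Pairwise fun i j => Disjoint (Set.range (γ i)) (Set.range (γ j))

/-- An `l`-regular shape: a bounded open connected set whose boundary is a finite
disjoint union of simple closed `C²` curves such that at every concave boundary
point the radius of curvature is at least `l` (i.e. `l·|κ| ≤ 1`). -/
structure IsLRegularShape (l : ℝ) (Ω : Set E2) : Prop where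
  isOpen : IsOpen Ω
  bounded : Bornology.IsBounded Ω
  connected : IsConnected Ω
  boundary_curves : ∃ (N : ℕ) (γ : Fin N → ℝ → E2),
    (∀ i, IsSimpleClosedCurve 2 (γ i)) ∧
    frontier Ω = ⋃ i, Set.range (γ i) ∧
    (Pairwise fun i j => Disjoint (Set.range (γ i)) (Set.range (γ j))) ∧
    ∀ i t, IsConcavePointAt Ω (γ i t) (deriv (γ i) t) → l * |curvature2D (γ i) t| ≤ 1

section AuxLemmas
open Complex

theorem aux_snd_deriv_nonpos {φ Φ' : ℝ → ℝ} {s : ℝ} (hmax : IsLocalMax φ 0)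
    (hd : ∀ᶠ t in 𝓝 (0:ℝ), HasDerivAt φ (Φ' t) t) (hd2 : HasDerivAt Φ' s 0) : s ≤ 0 := by
  by_contra hs
  push_neg at hs
  have h0 : Φ' 0 = 0 := hmax.hasDerivAt_eq_zero hd.self_of_nhds
  have hslope : Tendsto (fun t => Φ' t / t) (𝓝[>] (0:ℝ)) (𝓝 s) := by
    have h1 := hasDerivAt_iff_tendsto_slope.mp hd2
    have h2 : Set.Ioi (0:ℝ) ⊆ {(0:ℝ)}ᶜ := fun t ht => ne_of_gt ht
    have h3 := h1.mono_left (nhdsWithin_mono 0 h2)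
    have : (fun t => Φ' t / t) =ᶠ[𝓝[>] (0:ℝ)] slope Φ' 0 := by
      filter_upwards [self_mem_nhdsWithin] with t ht
      simp [slope_def_field, h0]
    exact Tendsto.congr' this.symm h3
  have hev : ∀ᶠ t in 𝓝[>] (0:ℝ), 0 < Φ' t := by
    have h1 : ∀ᶠ t in 𝓝[>] (0:ℝ), s/2 < Φ' t / t :=
      hslope.eventually (eventually_gt_nhds (by linarith))
    filter_upwards [h1, self_mem_nhdsWithin] with t ht1 ht2
    have ht : (0:ℝ) < t := ht2
    have h3 := mul_lt_mul_of_pos_right ht1 ht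
    rw [div_mul_cancel₀ _ (ne_of_gt ht)] at h3
    nlinarith
  obtain ⟨u, hu, h1⟩ := mem_nhdsGT_iff_exists_Ioo_subset.mp hev
  obtain ⟨ε, hε, h2⟩ := Metric.eventually_nhds_iff.mp (hd.and hmax)
  have hu' : (0:ℝ) < u := hu
  set δ := min (u/2) (ε/2) with hδ
  have hδpos : 0 < δ := lt_min (by linarith) (by linarith)
  have hsub : ∀ y ∈ Icc (0:ℝ) δ, dist y 0 < ε := by
    intro y hy
    rw [Real.dist_eq, sub_zero, _root_.abs_of_nonneg hy.1]
    have : δ ≤ ε/2 := min_le_right _ _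
    linarith [hy.2]
  have hmono : StrictMonoOn φ (Icc 0 δ) := by
    apply strictMonoOn_of_hasDerivWithinAt_pos (convex_Icc 0 δ)
      (f' := Φ')
    · intro y hy
      exact ((h2 (hsub y hy)).1).continuousAt.continuousWithinAt
    · intro y hy
      rw [interior_Icc] at hy
      exact ((h2 (hsub y (Ioo_subset_Icc_self hy))).1).hasDerivWithinAt
    · intro y hy
      rw [interior_Icc] at hy
      apply h1
      constructor
      · exact hy.1
      · have : δ ≤ u/2 := min_le_left _ _
        linarith [hy.2]
  have hlt : φ 0 < φ δ :=
    hmono (left_mem_Icc.mpr hδpos.le) (right_mem_Icc.mpr hδpos.le) hδpos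
  have hle : φ δ ≤ φ 0 := (h2 (hsub δ (right_mem_Icc.mpr hδpos.le))).2
  linarith

theorem aux_no_interior_max {U : Set ℂ} (hU : IsOpen U) {F : ℂ → ℂ}
    (hF : DifferentiableOn ℂ F U) {a : ℝ} (ha : a ≠ 0) {z₀ : ℂ} (hz₀ : z₀ ∈ U)
    (hmax : IsLocalMax (fun z => Complex.normSq (F z - ↑a * (starRingEnd ℂ) z)) z₀) : False := by
  have hF1 : ∀ z ∈ U, HasDerivAt F (deriv F z) z := fun z hz =>
    (hF.differentiableAt (hU.mem_nhds hz)).hasDerivAt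
  have hF2 : ∀ z ∈ U, HasDerivAt (deriv F) (deriv (deriv F) z) z := by
    intro z hz
    have h := ((hF.analyticOnNhd hU).deriv z hz).differentiableAt
    exact h.hasDerivAt
  set d1 := deriv F z₀ with hd1
  set d2 := deriv (deriv F) z₀ with hd2
  set G0 := F z₀ - ↑a * (starRingEnd ℂ) z₀ with hG0
  -- key directional estimate
  have key : ∀ e : ℂ,
      2 * Complex.normSq (e * d1 - ↑a * (starRingEnd ℂ) e)
        + 2 * ((starRingEnd ℂ) G0 * (e * e * d2)).re ≤ 0 := by
    intro e
    set l : ℝ → ℂ := fun t => z₀ + ↑t * e with hl_def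
    have hl : ∀ t : ℝ, HasDerivAt l e t := by
      intro t
      have h1 : HasDerivAt (fun t : ℝ => (↑t : ℂ)) 1 t := by
        exact Complex.ofRealCLM.hasDerivAt (x := t)
      simpa [hl_def] using (h1.mul_const e).const_add z₀
    have hl0 : l 0 = z₀ := by simp [hl_def]
    have hVmem : l ⁻¹' U ∈ 𝓝 (0:ℝ) := by
      have hcont : Continuous l := by fun_prop
      have : IsOpen (l ⁻¹' U) := hU.preimage hcont
      exact this.mem_nhds (by simp [hl0, hz₀])
    -- composition along the line
    have hcomp : ∀ (H : ℂ → ℂ) (w : ℂ) (t : ℝ), HasDerivAt H w (l t) →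
        HasDerivAt (fun t : ℝ => H (l t)) (e * w) t := by
      intro H w t h
      have h' := (h.hasFDerivAt.restrictScalars ℝ).comp_hasDerivAt t (hl t)
      convert h' using 1
      · rfl
      · rfl
      · rfl
    have hconj : ∀ t : ℝ, HasDerivAt (fun t : ℝ => (starRingEnd ℂ) (l t))
        ((starRingEnd ℂ) e) t := by
      intro t
      have heq : (fun t : ℝ => (starRingEnd ℂ) (l t))
          = fun t : ℝ => (starRingEnd ℂ) z₀ + ↑t * (starRingEnd ℂ) e := by
        funext t
        simp [hl_def, map_add, map_mul, Complex.conj_ofReal]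
      rw [heq]
      have h1 : HasDerivAt (fun t : ℝ => (↑t : ℂ)) 1 t := by
        exact Complex.ofRealCLM.hasDerivAt (x := t)
      simpa using (h1.mul_const ((starRingEnd ℂ) e)).const_add ((starRingEnd ℂ) z₀)
    set Gl : ℝ → ℂ := fun t => F (l t) - ↑a * (starRingEnd ℂ) (l t) with hGl_def
    set dG : ℝ → ℂ := fun t => e * deriv F (l t) - ↑a * (starRingEnd ℂ) e with hdG_def
    have hGl : ∀ t ∈ l ⁻¹' U, HasDerivAt Gl (dG t) t := by
      intro t ht
      exact (hcomp F (deriv F (l t)) t (hF1 _ ht)).sub ((hconj t).const_mul (↑a : ℂ))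
    have hdG : HasDerivAt dG (e * (e * d2)) 0 := by
      have h1 := (hcomp (deriv F) (deriv (deriv F) (l 0)) 0 (hF2 _ (by simp [hl0, hz₀]))).const_mul e
      rw [hl0] at h1
      simpa [hdG_def, mul_comm, mul_left_comm] using h1.sub_const (↑a * (starRingEnd ℂ) e)
    -- real and imaginary parts
    have hre : ∀ t ∈ l ⁻¹' U, HasDerivAt (fun t => (Gl t).re) (dG t).re t := by
      intro t ht
      exact Complex.reCLM.hasFDerivAt.comp_hasDerivAt t (hGl t ht)
    have him : ∀ t ∈ l ⁻¹' U, HasDerivAt (fun t => (Gl t).im) (dG t).im t := by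
      intro t ht
      exact Complex.imCLM.hasFDerivAt.comp_hasDerivAt t (hGl t ht)
    have hdre : HasDerivAt (fun t => (dG t).re) (e * (e * d2)).re 0 :=
      Complex.reCLM.hasFDerivAt.comp_hasDerivAt 0 hdG
    have hdim : HasDerivAt (fun t => (dG t).im) (e * (e * d2)).im 0 :=
      Complex.imCLM.hasFDerivAt.comp_hasDerivAt 0 hdG
    set φ : ℝ → ℝ := fun t => Complex.normSq (Gl t) with hφ_def
    set Φ' : ℝ → ℝ := fun t => 2 * ((Gl t).re * (dG t).re) + 2 * ((Gl t).im * (dG t).im)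
      with hΦ'_def
    have hφd : ∀ᶠ t in 𝓝 (0:ℝ), HasDerivAt φ (Φ' t) t := by
      filter_upwards [hVmem] with t ht
      have h1 := ((hre t ht).mul (hre t ht)).add ((him t ht).mul (him t ht))
      have heq : φ = fun t => (Gl t).re * (Gl t).re + (Gl t).im * (Gl t).im := by
        funext t
        simp [hφ_def, Complex.normSq_apply]
      rw [heq]
      convert h1 using 1
      · rfl
      · rfl
      · rfl
      · simp only [hΦ'_def]
        ring
    have h0mem : (0:ℝ) ∈ l ⁻¹' U := by simp [hl0, hz₀]
    have hΦ'd : HasDerivAt Φ'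
        (2 * ((dG 0).re * (dG 0).re + (Gl 0).re * (e * (e * d2)).re)
          + 2 * ((dG 0).im * (dG 0).im + (Gl 0).im * (e * (e * d2)).im)) 0 := by
      exact (((hre 0 h0mem).mul hdre).const_mul 2).add (((him 0 h0mem).mul hdim).const_mul 2)
    -- local max along the line
    have hφmax : IsLocalMax φ 0 := by
      have hcont : ContinuousAt l 0 := by fun_prop
      have htend : Tendsto l (𝓝 0) (𝓝 z₀) := by
        simpa [hl0] using hcont.tendsto
      have h1 := htend.eventually hmax
      have hφ0 : φ 0 = Complex.normSq (F z₀ - ↑a * (starRingEnd ℂ) z₀) := by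
        simp [hφ_def, hGl_def, hl0]
      filter_upwards [h1] with t ht
      rw [hφ0]
      exact ht
    have hkey := aux_snd_deriv_nonpos hφmax hφd hΦ'd
    have hGl0 : Gl 0 = G0 := by simp [hGl_def, hl0, hG0]
    have hdG0 : dG 0 = e * d1 - ↑a * (starRingEnd ℂ) e := by simp [hdG_def, hl0, hd1]
    rw [hGl0, hdG0] at hkey
    calc 2 * Complex.normSq (e * d1 - ↑a * (starRingEnd ℂ) e)
          + 2 * ((starRingEnd ℂ) G0 * (e * e * d2)).re
        = 2 * ((e * d1 - ↑a * (starRingEnd ℂ) e).re * (e * d1 - ↑a * (starRingEnd ℂ) e).re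
            + G0.re * (e * (e * d2)).re)
          + 2 * ((e * d1 - ↑a * (starRingEnd ℂ) e).im * (e * d1 - ↑a * (starRingEnd ℂ) e).im
            + G0.im * (e * (e * d2)).im) := by
          simp [Complex.normSq_apply, Complex.mul_re, Complex.conj_re, Complex.conj_im,
            mul_assoc]
          ring
      _ ≤ 0 := hkey
  -- instantiate e = 1 and e = I
  have k1 := key 1
  have kI := key Complex.I
  have e1 : (1:ℂ) * d1 - ↑a * (starRingEnd ℂ) 1 = d1 - ↑a := by simp
  have eI : Complex.I * d1 - ↑a * (starRingEnd ℂ) Complex.I = Complex.I * (d1 + ↑a) := by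
    simp [Complex.conj_I]
    ring
  rw [e1] at k1
  rw [eI] at kI
  have hnI : Complex.normSq (Complex.I * (d1 + ↑a)) = Complex.normSq (d1 + ↑a) := by
    rw [Complex.normSq_mul]
    simp
  rw [hnI] at kI
  have hsum : Complex.normSq (d1 - ↑a) + Complex.normSq (d1 + ↑a)
      = 2 * Complex.normSq d1 + 2 * a ^ 2 := by
    simp [Complex.normSq_apply, Complex.sub_re, Complex.sub_im, Complex.add_re, Complex.add_im,
      Complex.ofReal_re, Complex.ofReal_im]
    ring
  have hIsq : ((starRingEnd ℂ) G0 * (Complex.I * Complex.I * d2)).re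
      = -(((starRingEnd ℂ) G0 * ((1:ℂ) * (1:ℂ) * d2)).re) := by
    simp [Complex.I_mul_I]
  rw [hIsq] at kI
  have hpos : 0 < Complex.normSq d1 + a ^ 2 := by
    have : 0 < a ^ 2 := by positivity
    have h2 := Complex.normSq_nonneg d1
    linarith
  nlinarith [k1, kI, hsum]

theorem aux_cr {P Q : ℂ → ℝ} {P' Q' : ℂ →L[ℝ] ℝ} {z : ℂ}
    (hP : HasFDerivAt P P' z) (hQ : HasFDerivAt Q Q' z)
    (h1 : P' 1 = Q' Complex.I) (h2 : P' Complex.I = - Q' 1) :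
    DifferentiableAt ℂ (fun w => (P w : ℂ) + (Q w : ℂ) * Complex.I) z := by
  have hPc : HasFDerivAt (fun w => (P w : ℂ)) (Complex.ofRealCLM.comp P') z :=
    Complex.ofRealCLM.hasFDerivAt.comp z hP
  have hQc : HasFDerivAt (fun w => (Q w : ℂ)) (Complex.ofRealCLM.comp Q') z :=
    Complex.ofRealCLM.hasFDerivAt.comp z hQ
  have hQI : HasFDerivAt (fun w => (Q w : ℂ) * Complex.I)
      (Complex.I • Complex.ofRealCLM.comp Q') z := by
    simpa using hQc.mul_const Complex.I
  have htot := hPc.add hQI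
  set m : ℂ := (P' 1 : ℂ) + (Q' 1 : ℂ) * Complex.I with hm
  set Lc : ℂ →L[ℂ] ℂ := ContinuousLinearMap.smulRight (1 : ℂ →L[ℂ] ℂ) m with hLc
  have H : Lc.restrictScalars ℝ
      = Complex.ofRealCLM.comp P' + Complex.I • Complex.ofRealCLM.comp Q' := by
    apply ContinuousLinearMap.ext
    intro v
    have hv : v = v.re • (1:ℂ) + v.im • Complex.I := by
      simp [Complex.real_smul, Complex.re_add_im]
    rw [hv]
    simp only [ContinuousLinearMap.coe_restrictScalars', map_add, map_smul,
      ContinuousLinearMap.add_apply, ContinuousLinearMap.coe_comp', Function.comp_apply,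
      ContinuousLinearMap.smulRight_apply, ContinuousLinearMap.coe_smul', Pi.smul_apply,
      ContinuousLinearMap.one_apply, smul_eq_mul]
    rw [show Q' Complex.I = P' 1 from h1.symm, h2]
    simp only [hLc, hm, ContinuousLinearMap.smulRight_apply, ContinuousLinearMap.one_apply,
      smul_eq_mul, Complex.ofRealCLM_apply, Complex.real_smul]
    push_cast
    linear_combination (v.im : ℂ) * (Q' 1 : ℂ) * Complex.I_sq
  exact ⟨Lc, hasFDerivAt_of_restrictScalars ℝ htot H⟩
end AuxLemmas

/-- Decreasing Gradient: For a bounded open connected `Ω` with `C²`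
boundary curves and a Poisson solution `c` whose extension to the closure is
continuously differentiable (with gradient `g`), the supremum `M` of `‖∇c‖` over
the closure of `Ω` equals the supremum over the boundary `∂Ω`, and `‖∇c(x)‖ < M`
for every interior point `x ∈ Ω`. -/
theorem poisson_gradient_max_on_boundary (K D : ℝ) (hK : 0 < K) (hD : 0 < D)
    (Ω : Set E2) (hshape : IsShape Ω)
    (c : E2 → ℝ) (hc : IsPoissonSolution K D Ω c)
    (g : E2 → E2) (hg : ContinuousOn g (closure Ω))
    (hgrad : ∀ x ∈ closure Ω, HasGradientWithinAt c (g x) (closure Ω) x)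
    (M : ℝ) (hM : IsLUB ((fun x => ‖g x‖) '' closure Ω) M) :
    IsLUB ((fun x => ‖g x‖) '' frontier Ω) M ∧ ∀ x ∈ Ω, ‖g x‖ < M := by
  obtain ⟨hΩopen, hΩbdd, hΩconn, -⟩ := hshape
  have haK : 0 < K / (2 * D) := by positivity
  set a : ℝ := K / (2 * D) with ha_def
  have ha : a ≠ 0 := ne_of_gt haK
  set ι := Complex.orthonormalBasisOneI.repr with hι_def
  have hι1 : ι 1 = EuclideanSpace.single (0 : Fin 2) (1:ℝ) := by
    refine PiLp.ext fun j => ?_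
    fin_cases j <;> simp [hι_def, EuclideanSpace.single_apply]
  have hιI : ι Complex.I = EuclideanSpace.single (1 : Fin 2) (1:ℝ) := by
    refine PiLp.ext fun j => ?_
    fin_cases j <;> simp [hι_def, EuclideanSpace.single_apply]
  -- derivative facts on Ω
  have hcd : ∀ y ∈ Ω, HasFDerivAt c (fderiv ℝ c y) y := fun y hy =>
    ((hc.smooth.differentiableOn two_ne_zero).differentiableAt (hΩopen.mem_nhds hy)).hasFDerivAt
  have hc1 : ContDiffOn ℝ 1 (fderiv ℝ c) Ω :=
    hc.smooth.fderiv_of_isOpen hΩopen (by norm_num)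
  have hcd2 : ∀ y ∈ Ω, HasFDerivAt (fderiv ℝ c) (fderiv ℝ (fderiv ℝ c) y) y := fun y hy =>
    ((hc1.differentiableOn one_ne_zero).differentiableAt (hΩopen.mem_nhds hy)).hasFDerivAt
  have hgc : ∀ y ∈ Ω, ∀ i : Fin 2, g y i = fderiv ℝ c y (EuclideanSpace.single i 1) := by
    intro y hy i
    have h1 : HasFDerivAt c ((InnerProductSpace.toDual ℝ E2) (g y)) y := by
      have h2 := (hasGradientWithinAt_iff_hasFDerivWithinAt.mp (hgrad y (subset_closure hy)))
      exact h2.hasFDerivAt (mem_nhds_iff.mpr ⟨Ω, subset_closure, hΩopen, hy⟩)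
    rw [h1.fderiv]
    rw [InnerProductSpace.toDual_apply_apply, EuclideanSpace.inner_single_right]
    simp
  have hgiD : ∀ (i : Fin 2), ∀ y ∈ Ω, HasFDerivAt (fun q => g q i)
      ((ContinuousLinearMap.apply ℝ ℝ (EuclideanSpace.single i (1:ℝ))).comp
        (fderiv ℝ (fderiv ℝ c) y)) y := by
    intro i y hy
    have h1 := (ContinuousLinearMap.apply ℝ ℝ
      (EuclideanSpace.single i (1:ℝ))).hasFDerivAt.comp y (hcd2 y hy)
    apply h1.congr_of_eventuallyEq
    filter_upwards [hΩopen.mem_nhds hy] with q hq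
    exact hgc q hq i
  -- strict inequality in the interior
  have hinterior : ∀ x ∈ Ω, ‖g x‖ < M := by
    intro x₀ hx₀
    rcases lt_or_eq_of_le (hM.1 ⟨x₀, subset_closure hx₀, rfl⟩) with h | hMx
    · exact h
    exfalso
    set U : Set ℂ := ι ⁻¹' Ω with hU_def
    have hUopen : IsOpen U := hΩopen.preimage ι.continuous
    set P : ℂ → ℝ := fun w => g (ι w) 0 + a * w.re with hP_def
    set Q : ℂ → ℝ := fun w => -(g (ι w) 1) - a * w.im with hQ_def
    set F : ℂ → ℂ := fun w => (P w : ℂ) + (Q w : ℂ) * Complex.I with hF_def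
    have hιL : HasFDerivAt (ι : ℂ → E2)
        (ι.toLinearIsometry.toContinuousLinearMap) (0:ℂ) → True := fun _ => trivial
    have hFd : DifferentiableOn ℂ F U := by
      intro z hz
      have hx : ι z ∈ Ω := hz
      set A := fderiv ℝ (fderiv ℝ c) (ι z) with hA_def
      have hsymm : ∀ v w, A v w = A w v := fun v w =>
        second_derivative_symmetric_of_eventually
          (Filter.eventually_of_mem (hΩopen.mem_nhds hx) (fun y hy => hcd y hy))
          (hcd2 (ι z) hx) v w
      have hcompi : ∀ i : Fin 2, HasFDerivAt (fun w : ℂ => g (ι w) i)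
          (((ContinuousLinearMap.apply ℝ ℝ (EuclideanSpace.single i (1:ℝ))).comp A).comp
            (ι.toLinearIsometry.toContinuousLinearMap)) z := by
        intro i
        have h2 : HasFDerivAt (ι : ℂ → E2) (ι.toLinearIsometry.toContinuousLinearMap) z :=
          ι.toLinearIsometry.toContinuousLinearMap.hasFDerivAt
        exact (hgiD i (ι z) hx).comp z h2
      have hPd := (hcompi 0).add (Complex.reCLM.hasFDerivAt.const_mul a)
      have hQd := ((hcompi 1).neg).sub (Complex.imCLM.hasFDerivAt.const_mul a)
      have hfd2 : ∀ i : Fin 2,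
          fderiv ℝ (fun q => fderiv ℝ c q (EuclideanSpace.single i 1)) (ι z)
            = (ContinuousLinearMap.apply ℝ ℝ (EuclideanSpace.single i (1:ℝ))).comp A := by
        intro i
        have h3 := (ContinuousLinearMap.apply ℝ ℝ
          (EuclideanSpace.single i (1:ℝ))).hasFDerivAt.comp (ι z) (hcd2 (ι z) hx)
        exact h3.fderiv
      have hlap : A (EuclideanSpace.single (0:Fin 2) (1:ℝ)) (EuclideanSpace.single (0:Fin 2) (1:ℝ))
          + A (EuclideanSpace.single (1:Fin 2) (1:ℝ)) (EuclideanSpace.single (1:Fin 2) (1:ℝ))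
          = -(K / D) := by
        have h1 := hc.eqn (ι z) hx
        simp only [lap, Fin.sum_univ_two] at h1
        rw [hfd2 0, hfd2 1] at h1
        simpa using h1
      have h2a : K / D = 2 * a := by
        rw [ha_def]; field_simp
      apply DifferentiableAt.differentiableWithinAt
      refine aux_cr hPd hQd ?_ ?_
      · simp only [ContinuousLinearMap.add_apply, ContinuousLinearMap.coe_comp',
          Function.comp_apply, ContinuousLinearMap.coe_smul', Pi.smul_apply,
          ContinuousLinearMap.sub_apply, ContinuousLinearMap.neg_apply, smul_eq_mul,
          LinearIsometry.coe_toContinuousLinearMap, LinearIsometryEquiv.coe_toLinearIsometry,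
          ContinuousLinearMap.apply_apply, Complex.reCLM_apply, Complex.imCLM_apply,
          Complex.one_re, Complex.one_im, Complex.I_re, Complex.I_im, hι1, hιI]
        rw [h2a] at hlap
        linarith
      · simp only [ContinuousLinearMap.add_apply, ContinuousLinearMap.coe_comp',
          Function.comp_apply, ContinuousLinearMap.coe_smul', Pi.smul_apply,
          ContinuousLinearMap.sub_apply, ContinuousLinearMap.neg_apply, smul_eq_mul,
          LinearIsometry.coe_toContinuousLinearMap, LinearIsometryEquiv.coe_toLinearIsometry,
          ContinuousLinearMap.apply_apply, Complex.reCLM_apply, Complex.imCLM_apply,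
          Complex.one_re, Complex.one_im, Complex.I_re, Complex.I_im, hι1, hιI]
        rw [hsymm (EuclideanSpace.single (1:Fin 2) (1:ℝ)) (EuclideanSpace.single (0:Fin 2) (1:ℝ))]
        ring
    -- local max at interior point
    set z₀ : ℂ := ι.symm x₀ with hz₀_def
    have hz₀U : z₀ ∈ U := by
      simp only [hU_def, Set.mem_preimage, hz₀_def, LinearIsometryEquiv.apply_symm_apply]
      exact hx₀
    have hnormsq : ∀ w : ℂ, Complex.normSq (F w - ↑a * (starRingEnd ℂ) w)
        = ‖g (ι w)‖ ^ 2 := by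
      intro w
      have h1 : (F w - ↑a * (starRingEnd ℂ) w).re = g (ι w) 0 := by
        simp [hF_def, hP_def, hQ_def]
      have h2 : (F w - ↑a * (starRingEnd ℂ) w).im = -(g (ι w) 1) := by
        simp [hF_def, hP_def, hQ_def]
      have hsum : ‖g (ι w)‖ ^ 2 = (g (ι w) 0)^2 + (g (ι w) 1)^2 := by
        rw [EuclideanSpace.norm_eq, Real.sq_sqrt (by positivity)]
        simp [Fin.sum_univ_two, sq_abs]
      rw [Complex.normSq_apply, h1, h2, hsum]
      ring
    have hmax : IsLocalMax (fun w => Complex.normSq (F w - ↑a * (starRingEnd ℂ) w)) z₀ := by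
      filter_upwards [hUopen.mem_nhds hz₀U] with w hw
      simp only [hnormsq]
      have h1 : ‖g (ι w)‖ ≤ M := hM.1 ⟨ι w, subset_closure hw, rfl⟩
      have h2 : ι z₀ = x₀ := by simp [hz₀_def]
      rw [h2]
      have hMx' : ‖g x₀‖ = M := hMx
      exact pow_le_pow_left₀ (norm_nonneg _) (le_of_le_of_eq h1 hMx'.symm) 2
    exact aux_no_interior_max hUopen hFd ha hz₀U hmax
  -- supremum attained on the boundary
  have hcompact : IsCompact (closure Ω) :=
    Metric.isCompact_of_isClosed_isBounded isClosed_closure hΩbdd.closure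
  obtain ⟨p, hpmem, hpmax⟩ := hcompact.exists_isMaxOn hΩconn.nonempty.closure hg.norm
  have hgreat : IsGreatest ((fun x => ‖g x‖) '' closure Ω) ‖g p‖ :=
    ⟨⟨p, hpmem, rfl⟩, by rintro y ⟨q, hq, rfl⟩; exact hpmax hq⟩
  have hpM : ‖g p‖ = M := (hgreat.isLUB.unique hM)
  have hpfront : p ∈ frontier Ω := by
    rw [hΩopen.frontier_eq]
    refine ⟨hpmem, fun hp => ?_⟩
    exact absurd hpM (ne_of_lt (hinterior p hp))
  refine ⟨⟨?_, ?_⟩, hinterior⟩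
  · rintro y ⟨q, hq, rfl⟩
    rw [hΩopen.frontier_eq] at hq
    exact hM.1 ⟨q, hq.1, rfl⟩
  · intro b hb
    have h1 := hb ⟨p, hpfront, rfl⟩
    linarith [hpM]
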